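/- If f : Γ × Γ → C_0(Γ, ℚ) satisfies the Lipschitz-type estimate ‖f(b,a) - f(b,a')‖_1 ≤ L λ^{(a|a')_b} with 0 ≤ λ < 1, and each f(b,a) is supported in a set of cardinality at most N, then the ℓ^p-normalized h(b,a) = f(b,a)/‖f(b,a)‖_p (for f(b,a) a convex combination) satisfies ‖h(b,a) - h(b,a')‖_p ≤ C ρ^{(a|a')_b} for some C ≥ 0 and 0 ≤ ρ < 1. -/

import Mathlib

open Finset

/-- The `ℓ^p` norm of a finitely supported function. -/
noncomputable def lpNorm {Γ : Type*} (p : ℝ) (f : Γ →₀ ℝ) : ℝ :=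
    (∑ x ∈ f.support, |f x| ^ p) ^ (1 / p)

/-- The `ℓ^1` norm of a finitely supported function. -/
noncomputable def l1Norm {Γ : Type*} (f : Γ →₀ ℝ) : ℝ :=
    ∑ x ∈ f.support, |f x|

section AuxLemmas

variable {Γ : Type*}

lemma lpNorm_eq_sum {p : ℝ} (hp : 0 < p) (f : Γ →₀ ℝ) {s : Finset Γ} (hs : f.support ⊆ s) :
    lpNorm p f = (∑ x ∈ s, |f x| ^ p) ^ (1 / p) := by
  unfold lpNorm
  congr 1
  refine Finset.sum_subset hs fun x _ hx => ?_
  rw [Finsupp.notMem_support_iff.mp hx]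
  simp [Real.zero_rpow hp.ne']

lemma lpNorm_nonneg {p : ℝ} (f : Γ →₀ ℝ) : 0 ≤ lpNorm p f :=
  Real.rpow_nonneg (Finset.sum_nonneg fun x _ => Real.rpow_nonneg (abs_nonneg _) _) _

lemma lpNorm_add_le {p : ℝ} (hp : 1 ≤ p) (u v : Γ →₀ ℝ) :
    lpNorm p (u + v) ≤ lpNorm p u + lpNorm p v := by
  classical
  have hp0 : 0 < p := lt_of_lt_of_le one_pos hp
  set s := u.support ∪ v.support with hs
  have h1 : (u + v).support ⊆ s := (Finsupp.support_add).trans (le_refl _)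
  rw [lpNorm_eq_sum hp0 _ h1, lpNorm_eq_sum hp0 u (Finset.subset_union_left),
    lpNorm_eq_sum hp0 v (Finset.subset_union_right)]
  have := Real.Lp_add_le s (fun x => u x) (fun x => v x) hp
  simpa [Finsupp.add_apply] using this

lemma lpNorm_neg {p : ℝ} (u : Γ →₀ ℝ) : lpNorm p (-u) = lpNorm p u := by
  unfold lpNorm
  rw [Finsupp.support_neg]
  simp

lemma lpNorm_smul {p : ℝ} (hp : 0 < p) (c : ℝ) (u : Γ →₀ ℝ) :
    lpNorm p (c • u) = |c| * lpNorm p u := by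
  have hsub : (c • u).support ⊆ u.support := Finsupp.support_smul
  rw [lpNorm_eq_sum hp _ hsub]
  unfold lpNorm
  have : ∀ x, |(c • u) x| ^ p = |c| ^ p * |u x| ^ p := by
    intro x
    rw [Finsupp.smul_apply, smul_eq_mul, abs_mul,
      Real.mul_rpow (abs_nonneg _) (abs_nonneg _)]
  simp_rw [this, ← Finset.mul_sum]
  rw [Real.mul_rpow (Real.rpow_nonneg (abs_nonneg _) _)
    (Finset.sum_nonneg fun x _ => Real.rpow_nonneg (abs_nonneg _) _),
    ← Real.rpow_mul (abs_nonneg c), mul_one_div, div_self hp.ne', Real.rpow_one]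

lemma lpNorm_le_l1Norm {p : ℝ} (hp : 1 ≤ p) (u : Γ →₀ ℝ) : lpNorm p u ≤ l1Norm u := by
  have hp0 : 0 < p := lt_of_lt_of_le one_pos hp
  set S := l1Norm u with hS
  have hS0 : 0 ≤ S := Finset.sum_nonneg fun x _ => abs_nonneg _
  have hxS : ∀ x ∈ u.support, |u x| ≤ S :=
    fun x hx => Finset.single_le_sum (fun y _ => abs_nonneg (u y)) hx
  have key : ∀ x ∈ u.support, |u x| ^ p ≤ S ^ (p - 1) * |u x| := by
    intro x hx
    rcases eq_or_lt_of_le (abs_nonneg (u x)) with h0 | h0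
    · rw [← h0, Real.zero_rpow hp0.ne', mul_zero]
    · have heq := Real.rpow_add h0 (p - 1) 1
      rw [sub_add_cancel, Real.rpow_one] at heq
      rw [heq]
      have := Real.rpow_le_rpow (abs_nonneg (u x)) (hxS x hx) (by linarith : 0 ≤ p - 1)
      exact mul_le_mul_of_nonneg_right this (abs_nonneg _)
  have hsum : ∑ x ∈ u.support, |u x| ^ p ≤ S ^ p := by
    calc ∑ x ∈ u.support, |u x| ^ p ≤ ∑ x ∈ u.support, S ^ (p - 1) * |u x| :=
          Finset.sum_le_sum key
      _ = S ^ (p - 1) * S := by rw [← Finset.mul_sum]; rfl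
      _ = S ^ p := by
          rcases eq_or_lt_of_le hS0 with h0 | h0
          · rw [← h0, mul_zero, Real.zero_rpow hp0.ne']
          · have heq := Real.rpow_add h0 (p - 1) 1
            rw [sub_add_cancel, Real.rpow_one] at heq
            exact heq.symm
  calc lpNorm p u ≤ (S ^ p) ^ (1 / p) := by
        unfold lpNorm
        exact Real.rpow_le_rpow (Finset.sum_nonneg fun x _ => Real.rpow_nonneg (abs_nonneg _) _)
          hsum (by positivity)
    _ = S := by
        rw [← Real.rpow_mul hS0, mul_one_div, div_self hp0.ne', Real.rpow_one]

lemma abs_le_lpNorm {p : ℝ} (hp : 1 ≤ p) (u : Γ →₀ ℝ) (x : Γ) : |u x| ≤ lpNorm p u := by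
  have hp0 : 0 < p := lt_of_lt_of_le one_pos hp
  by_cases hx : x ∈ u.support
  · have h1 : |u x| ^ p ≤ ∑ y ∈ u.support, |u y| ^ p :=
      Finset.single_le_sum (fun y _ => Real.rpow_nonneg (abs_nonneg _) _) hx
    calc |u x| = (|u x| ^ p) ^ (1 / p) := by
          rw [← Real.rpow_mul (abs_nonneg _), mul_one_div, div_self hp0.ne', Real.rpow_one]
      _ ≤ lpNorm p u := Real.rpow_le_rpow (Real.rpow_nonneg (abs_nonneg _) _) h1 (by positivity)
  · rw [Finsupp.notMem_support_iff.mp hx]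
    simpa using lpNorm_nonneg (p := p) u

lemma inv_card_le_lpNorm {p : ℝ} (hp : 1 ≤ p) (u : Γ →₀ ℝ) {N : ℕ} (hN : 1 ≤ N)
    (hcard : u.support.card ≤ N) (h1 : l1Norm u = 1) : ((N : ℝ))⁻¹ ≤ lpNorm p u := by
  have hne : u.support.Nonempty := by
    by_contra h
    rw [Finset.not_nonempty_iff_eq_empty] at h
    unfold l1Norm at h1
    rw [h] at h1
    simp at h1
  obtain ⟨x0, hx0, hM⟩ := Finset.exists_mem_eq_sup' hne (fun x => |u x|)
  set M := u.support.sup' hne (fun x => |u x|) with hMdef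
  have hsum : (1 : ℝ) ≤ u.support.card • M := by
    rw [← h1]
    exact Finset.sum_le_card_nsmul u.support _ M fun x hx => Finset.le_sup' (fun y => |u y|) hx
  rw [nsmul_eq_mul] at hsum
  have hM0 : 0 ≤ M := by rw [hM]; exact abs_nonneg _
  have hcard' : ((u.support.card : ℕ) : ℝ) ≤ (N : ℝ) := by exact_mod_cast hcard
  have hNM : (1 : ℝ) ≤ (N : ℝ) * M :=
    hsum.trans (mul_le_mul_of_nonneg_right hcard' hM0)
  have hNpos : (0 : ℝ) < N := by exact_mod_cast hN
  have hMle : (N : ℝ)⁻¹ ≤ M := by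
    rw [inv_eq_one_div, div_le_iff₀ hNpos]
    nlinarith [hNM]
  have hfin := abs_le_lpNorm hp u x0
  rw [← hM] at hfin
  exact hMle.trans hfin

end AuxLemmas

/-- If `f : Γ × Γ → C_0(Γ)` takes convex-combination values supported on at most `N` points
and satisfies `‖f(b,a) - f(b,a')‖_1 ≤ L λ^((a|a')_b)` with `0 ≤ λ < 1`, then the
`ℓ^p`-normalization `h(b,a) = f(b,a)/‖f(b,a)‖_p` satisfies
`‖h(b,a) - h(b,a')‖_p ≤ C ρ^((a|a')_b)` for some `C ≥ 0` and `0 ≤ ρ < 1`. -/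
theorem normalized_lipschitz {Γ : Type*} [Group Γ] [MetricSpace Γ] [Countable Γ]
    (f : Γ → Γ → (Γ →₀ ℝ)) (N : ℕ) (hN : 1 ≤ N)
    (hconv : ∀ b a : Γ, (∀ x, 0 ≤ f b a x) ∧ l1Norm (f b a) = 1)
    (hsupp : ∀ b a : Γ, (f b a).support.card ≤ N)
    (L lam : ℝ) (hL : 0 ≤ L) (hlam0 : 0 ≤ lam) (hlam1 : lam < 1)
    (hlip : ∀ b a a' : Γ, l1Norm (f b a - f b a') ≤
      L * lam ^ ((dist b a + dist b a' - dist a a') / 2))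
    (p : ℝ) (hp : 2 ≤ p) :
    ∃ (C ρ : ℝ), 0 ≤ C ∧ 0 ≤ ρ ∧ ρ < 1 ∧
      ∀ b a a' : Γ,
        lpNorm p ((lpNorm p (f b a))⁻¹ • f b a - (lpNorm p (f b a'))⁻¹ • f b a') ≤
          C * ρ ^ ((dist b a + dist b a' - dist a a') / 2) := by
  have hp1 : (1 : ℝ) ≤ p := le_trans one_le_two hp
  have hp0 : (0 : ℝ) < p := lt_of_lt_of_le one_pos hp1
  refine ⟨2 * N * L, lam, by positivity, hlam0, hlam1, fun b a a' => ?_⟩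
  set x := (dist b a + dist b a' - dist a a') / 2 with hxdef
  set u := f b a with hu
  set v := f b a' with hv
  set nu := lpNorm p u with hnu
  set nv := lpNorm p v with hnv
  have hNu : ((N : ℝ))⁻¹ ≤ nu := inv_card_le_lpNorm hp1 u hN (hsupp b a) (hconv b a).2
  have hNv : ((N : ℝ))⁻¹ ≤ nv := inv_card_le_lpNorm hp1 v hN (hsupp b a') (hconv b a').2
  have hNpos : (0 : ℝ) < N := by exact_mod_cast hN
  have hNinv : (0 : ℝ) < (N : ℝ)⁻¹ := by positivity
  have hupos : 0 < nu := lt_of_lt_of_le hNinv hNu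
  have hvpos : 0 < nv := lt_of_lt_of_le hNinv hNv
  have hinvN : nu⁻¹ ≤ (N : ℝ) := by
    have := inv_anti₀ hNinv hNu
    simpa using this
  -- bound on lpNorm of difference
  have hDp : lpNorm p (u - v) ≤ L * lam ^ x := (lpNorm_le_l1Norm hp1 _).trans (hlip b a a')
  have hD0 : 0 ≤ lpNorm p (u - v) := lpNorm_nonneg _
  have hx0 : 0 ≤ L * lam ^ x := le_trans hD0 hDp
  -- reverse triangle inequality
  have habs : |nv - nu| ≤ lpNorm p (u - v) := by
    have h1 : nv ≤ lpNorm p (v - u) + nu := by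
      have := lpNorm_add_le hp1 (v - u) u
      rw [sub_add_cancel] at this
      exact this
    have h2 : nu ≤ lpNorm p (u - v) + nv := by
      have := lpNorm_add_le hp1 (u - v) v
      rw [sub_add_cancel] at this
      exact this
    have hsym : lpNorm p (v - u) = lpNorm p (u - v) := by
      rw [← lpNorm_neg (u - v), neg_sub]
    rw [abs_sub_le_iff]
    constructor <;> [linarith [hsym ▸ h1]; linarith]
  -- split
  have hsplit : nu⁻¹ • u - nv⁻¹ • v = nu⁻¹ • (u - v) + (nu⁻¹ - nv⁻¹) • v := by
    module
  rw [hsplit]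
  have hterm2 : lpNorm p ((nu⁻¹ - nv⁻¹) • v) = |nu⁻¹ - nv⁻¹| * nv :=
    lpNorm_smul hp0 _ v
  have hterm2' : |nu⁻¹ - nv⁻¹| * nv = |nv - nu| * nu⁻¹ := by
    have hrw : nu⁻¹ - nv⁻¹ = (nv - nu) * (nu⁻¹ * nv⁻¹) := by
      field_simp
    rw [hrw, abs_mul, abs_of_pos (by positivity : (0:ℝ) < nu⁻¹ * nv⁻¹)]
    field_simp
  calc lpNorm p (nu⁻¹ • (u - v) + (nu⁻¹ - nv⁻¹) • v)
      ≤ lpNorm p (nu⁻¹ • (u - v)) + lpNorm p ((nu⁻¹ - nv⁻¹) • v) := lpNorm_add_le hp1 _ _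
    _ = |nu⁻¹| * lpNorm p (u - v) + |nv - nu| * nu⁻¹ := by
        rw [lpNorm_smul hp0, hterm2, hterm2']
    _ = nu⁻¹ * lpNorm p (u - v) + |nv - nu| * nu⁻¹ := by
        rw [abs_of_pos (by positivity : (0:ℝ) < nu⁻¹)]
    _ ≤ (N : ℝ) * (L * lam ^ x) + (L * lam ^ x) * (N : ℝ) :=
        add_le_add (mul_le_mul hinvN hDp hD0 (le_of_lt hNpos))
          (mul_le_mul (habs.trans hDp) hinvN (by positivity) hx0)
    _ = 2 * (N : ℝ) * L * lam ^ x := by ring
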